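/- Let k be an algebraically closed field of characteristic zero and V a 6-dimensional k-vector space. Let ω₁ and ω₂ be alternating bilinear forms on V, each of rank exactly 4, such that rad(ω₁) = rad(ω₂) as subspaces of V, and suppose that every nonzero form in the linear span of ω₁ and ω₂ has rank at least 4. Then ω₁ and ω₂ are linearly dependent. -/

import Mathlib

/-- Injectivity of the classifying map `y ↦ ker y` on the Pfaffian cubic: if `ω₁, ω₂` are
alternating bilinear forms of rank exactly 4 on a 6-dimensional vector space `V` over an
algebraically closed field of characteristic zero, with equal radicals, and if every nonzero
form in the span of `ω₁, ω₂` has rank at least 4, then `ω₁` and `ω₂` are linearly dependent.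
(Forms are linear maps `V →ₗ V →ₗ k`; the radical of `ω` is `ker ω` and its rank is
`dim V - dim (ker ω)`.) -/
theorem skew_forms_same_radical_linearly_dependent
    (k : Type*) [Field k] [IsAlgClosed k] [CharZero k]
    (V : Type*) [AddCommGroup V] [Module k V] [FiniteDimensional k V]
    (hV : Module.finrank k V = 6)
    (ω₁ ω₂ : V →ₗ[k] V →ₗ[k] k)
    (halt₁ : ∀ v : V, ω₁ v v = 0) (halt₂ : ∀ v : V, ω₂ v v = 0)
    (hrk₁ : Module.finrank k V - Module.finrank k (LinearMap.ker ω₁) = 4)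
    (hrk₂ : Module.finrank k V - Module.finrank k (LinearMap.ker ω₂) = 4)
    (hker : LinearMap.ker ω₁ = LinearMap.ker ω₂)
    (hspan : ∀ c₁ c₂ : k, c₁ • ω₁ + c₂ • ω₂ ≠ 0 →
      4 ≤ Module.finrank k V - Module.finrank k (LinearMap.ker (c₁ • ω₁ + c₂ • ω₂))) :
    ∃ c₁ c₂ : k, (c₁ ≠ 0 ∨ c₂ ≠ 0) ∧ c₁ • ω₁ + c₂ • ω₂ = 0 := by
  -- skew-symmetry
  have hskew₁ : ∀ v w : V, ω₁ v w = - ω₁ w v := by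
    intro v w
    have h := halt₁ (v + w)
    simp only [map_add, LinearMap.add_apply, halt₁] at h
    linear_combination h
  have hskew₂ : ∀ v w : V, ω₂ v w = - ω₂ w v := by
    intro v w
    have h := halt₂ (v + w)
    simp only [map_add, LinearMap.add_apply, halt₂] at h
    linear_combination h
  set R := LinearMap.ker ω₁ with hR
  have hkerle : Module.finrank k R ≤ Module.finrank k V := Submodule.finrank_le R
  have hRdim : Module.finrank k R = 2 := by omega
  obtain ⟨U, hU⟩ := Submodule.exists_isCompl R
  have hUdim : Module.finrank k U = 4 := by
    have := Submodule.finrank_add_eq_of_isCompl hU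
    omega
  -- restrictions to U
  set B₁ : U →ₗ[k] U →ₗ[k] k := ω₁.compl₁₂ U.subtype U.subtype with hB₁
  set B₂ : U →ₗ[k] U →ₗ[k] k := ω₂.compl₁₂ U.subtype U.subtype with hB₂
  -- B₁ is injective U → Dual U
  have hB₁inj : Function.Injective B₁ := by
    rw [← LinearMap.ker_eq_bot]
    rw [Submodule.eq_bot_iff]
    intro u hu
    have hu' : ∀ u' : U, ω₁ u.val u'.val = 0 := by
      intro u'
      have : B₁ u u' = 0 := by rw [hu]; rfl
      simpa [hB₁, LinearMap.compl₁₂_apply] using this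
    have hmem : u.val ∈ R := by
      rw [hR, LinearMap.mem_ker]
      ext v
      obtain ⟨r, u', hr, hu'', rfl⟩ := Submodule.codisjoint_iff_exists_add_eq.mp hU.codisjoint v
      have h1 : ω₁ u.val r = 0 := by
        rw [hskew₁]
        have : ω₁ r = 0 := hr
        simp [this]
      have h2 : ω₁ u.val u' = 0 := hu' ⟨u', hu''⟩
      simp [map_add, h1, h2]
    have : u.val ∈ R ⊓ U := ⟨hmem, u.property⟩
    rw [hU.inf_eq_bot] at this
    exact Subtype.ext this
  have hdual : Module.finrank k U = Module.finrank k (U →ₗ[k] k) :=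
    (Subspace.dual_finrank_eq).symm
  let e : U ≃ₗ[k] (U →ₗ[k] k) := B₁.linearEquivOfInjective hB₁inj hdual
  let f : Module.End k U := e.symm.toLinearMap ∘ₗ B₂
  have : Nontrivial U := by
    have : 0 < Module.finrank k U := by omega
    exact Module.nontrivial_of_finrank_pos this
  obtain ⟨c, hc⟩ := Module.End.exists_eigenvalue f
  obtain ⟨u, hu⟩ := hc.exists_hasEigenvector
  have hu0 : u ≠ 0 := hu.right
  have hfu : f u = c • u := hu.apply_eq_smul
  have hBu : B₂ u = c • B₁ u := by
    have h2 : B₂ u = e (c • u) := by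
      rw [← LinearEquiv.apply_symm_apply e (B₂ u)]
      exact congrArg e hfu
    rw [h2, map_smul]
    congr 1
  -- the form ω := (-c) • ω₁ + 1 • ω₂ kills u.val
  set ω : V →ₗ[k] V →ₗ[k] k := (-c) • ω₁ + (1 : k) • ω₂ with hω
  by_cases hω0 : ω = 0
  · exact ⟨-c, 1, Or.inr one_ne_zero, hω0⟩
  · exfalso
    have hukill : u.val ∈ LinearMap.ker ω := by
      rw [LinearMap.mem_ker]
      ext v
      obtain ⟨r, u', hr, hu'', rfl⟩ := Submodule.codisjoint_iff_exists_add_eq.mp hU.codisjoint v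
      have h1 : ω₁ u.val r = 0 := by
        rw [hskew₁]; have : ω₁ r = 0 := hr; simp [this]
      have h2 : ω₂ u.val r = 0 := by
        rw [hskew₂]
        have hr2 : r ∈ LinearMap.ker ω₂ := hker ▸ hr
        have : ω₂ r = 0 := hr2
        simp [this]
      have h3 : ω₂ u.val u' = c * ω₁ u.val u' := by
        have := congrArg (fun g => g ⟨u', hu''⟩) hBu
        simpa [hB₁, hB₂, LinearMap.compl₁₂_apply] using this
      simp only [hω, LinearMap.add_apply, LinearMap.smul_apply, LinearMap.zero_apply,
        map_add, one_smul, smul_eq_mul]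
      linear_combination (-c) * h1 + h2 + h3
    have huR : u.val ∉ R := by
      intro hmem
      refine hu0 (Subtype.ext ?_)
      have h : u.val ∈ R ⊓ U := ⟨hmem, u.property⟩
      rw [hU.inf_eq_bot] at h
      simpa using h
    have hle : R ⊔ (k ∙ u.val) ≤ LinearMap.ker ω := by
      apply sup_le
      · intro r hr
        rw [LinearMap.mem_ker]
        have hr1 : ω₁ r = 0 := hr
        have hr2 : ω₂ r = 0 := (hker ▸ hr : r ∈ LinearMap.ker ω₂)
        simp [hω, hr1, hr2]
      · rw [Submodule.span_singleton_le_iff_mem]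
        exact hukill
    have hlt : R < R ⊔ (k ∙ u.val) := by
      refine lt_of_le_of_ne le_sup_left ?_
      intro heq
      apply huR
      rw [heq]
      exact Submodule.mem_sup_right (Submodule.mem_span_singleton_self u.val)
    have h3le : 3 ≤ Module.finrank k (LinearMap.ker ω) := by
      have h1 := Submodule.finrank_lt_finrank_of_lt hlt
      have h2 := Submodule.finrank_mono hle
      omega
    have hkerle2 : Module.finrank k (LinearMap.ker ω) ≤ Module.finrank k V :=
      Submodule.finrank_le _
    have := hspan (-c) 1 hω0
    rw [← hω] at this
    omega
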